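/- Let n ≥ 2, s ≥ 1, let σ > 0 and c₂′ > 0, let X₀ be an n×s real matrix whose columns each have squared Euclidean norm n, and let ε = (ε₁,…,εₙ) be a random vector whose coordinates are independent with each εᵢ ~ N(0, σ²). Then P( max_{1≤j≤s} |n⁻¹ (X₀)_jᵀ ε| > c₂′ √((log n)/n) ) ≤ √(2/π) · c₂′⁻¹ σ s (log n)^{−1/2} · n^{−c₂′²/(2σ²)}, where (X₀)_j denotes the j-th column of X₀. -/

import Mathlib

open MeasureTheory ProbabilityTheory

open Real Filter
open scoped NNReal ENNReal

lemma gauss_conv_real (v₁ v₂ : ℝ≥0) (h₁ : v₁ ≠ 0) (h₂ : v₂ ≠ 0) (y : ℝ) :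
    ∫ x, gaussianPDFReal 0 v₁ x * gaussianPDFReal 0 v₂ (y - x)
      = gaussianPDFReal 0 (v₁ + v₂) y := by
  have ha : (0:ℝ) < v₁ := by exact_mod_cast pos_iff_ne_zero.mpr h₁
  have hb : (0:ℝ) < v₂ := by exact_mod_cast pos_iff_ne_zero.mpr h₂
  set a : ℝ := (v₁:ℝ) with ha'
  set b : ℝ := (v₂:ℝ) with hb'
  have hV : (0:ℝ) < a + b := by linarith
  set B : ℝ := (a + b) / (2 * a * b) with hB'
  have hBpos : 0 < B := by positivity
  set m : ℝ := a * y / (a + b) with hm'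
  have key : ∀ x : ℝ, gaussianPDFReal 0 v₁ x * gaussianPDFReal 0 v₂ (y - x)
      = ((√(2 * π * a))⁻¹ * (√(2 * π * b))⁻¹ * rexp (-y^2 / (2 * (a + b))))
        * rexp (-B * (x - m)^2) := by
    intro x
    simp only [gaussianPDFReal, sub_zero]
    rw [show ((√(2 * π * (v₁:ℝ)))⁻¹ * rexp (-x ^ 2 / (2 * (v₁:ℝ)))) *
        ((√(2 * π * (v₂:ℝ)))⁻¹ * rexp (-(y - x) ^ 2 / (2 * (v₂:ℝ))))
        = (√(2 * π * a))⁻¹ * (√(2 * π * b))⁻¹ *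
          (rexp (-x ^ 2 / (2 * a)) * rexp (-(y - x) ^ 2 / (2 * b))) by ring,
      ← Real.exp_add,
      show (-x ^ 2 / (2 * a) + -(y - x) ^ 2 / (2 * b))
        = -y^2 / (2 * (a + b)) + (-B * (x - m)^2) by
        rw [hB', hm']; field_simp; ring,
      Real.exp_add]
    ring
  rw [funext key, MeasureTheory.integral_const_mul,
    integral_sub_right_eq_self (μ := volume) (fun x : ℝ => rexp (-B * x ^ 2)) m,
    integral_gaussian B]
  simp only [gaussianPDFReal, sub_zero, NNReal.coe_add, ← ha', ← hb']
  rw [show π / B = 2 * π * (a * b) / (a + b) by rw [hB']; field_simp]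
  rw [show ((√(2 * π * a))⁻¹ * (√(2 * π * b))⁻¹ * rexp (-y ^ 2 / (2 * (a + b)))) *
      √(2 * π * (a * b) / (a + b))
    = ((√(2 * π * a))⁻¹ * (√(2 * π * b))⁻¹ * √(2 * π * (a * b) / (a + b)))
      * rexp (-y ^ 2 / (2 * (a + b))) by ring]
  congr 1
  rw [← Real.sqrt_inv, ← Real.sqrt_inv, ← Real.sqrt_mul (by positivity),
    ← Real.sqrt_mul (by positivity), ← Real.sqrt_inv]
  congr 1
  field_simp

lemma gaussianPDFReal_le (v : ℝ≥0) (μ x : ℝ) :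
    gaussianPDFReal μ v x ≤ (√(2 * π * v))⁻¹ := by
  rw [gaussianPDFReal]
  have h1 : rexp (-(x - μ) ^ 2 / (2 * v)) ≤ 1 := by
    rw [Real.exp_le_one_iff]
    rcases eq_or_ne v 0 with h | h
    · simp [h]
    · have : (0:ℝ) < v := by exact_mod_cast pos_iff_ne_zero.mpr h
      have := sq_nonneg (x - μ)
      apply div_nonpos_of_nonpos_of_nonneg <;> nlinarith
  nlinarith [Real.sqrt_nonneg (2 * π * v), inv_nonneg.mpr (Real.sqrt_nonneg (2 * π * v)),
    gaussianPDFReal_nonneg μ v x]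

lemma integrable_conv_integrand (v₁ v₂ : ℝ≥0) (y : ℝ) :
    Integrable (fun x => gaussianPDFReal 0 v₁ x * gaussianPDFReal 0 v₂ (y - x)) := by
  have h := (integrable_gaussianPDFReal 0 v₁).bdd_mul
    (f := fun x => gaussianPDFReal 0 v₂ (y - x))
    (((measurable_gaussianPDFReal 0 v₂).comp (measurable_const.sub measurable_id)).aestronglyMeasurable)
    (c := (√(2 * π * v₂))⁻¹) (ae_of_all _ fun x => by
      rw [Real.norm_eq_abs, abs_of_nonneg (gaussianPDFReal_nonneg _ _ _)]
      exact gaussianPDFReal_le v₂ 0 (y - x))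
  simpa [mul_comm] using h

lemma gaussianReal_conv (v₁ v₂ : ℝ≥0) :
    (gaussianReal 0 v₁).conv (gaussianReal 0 v₂) = gaussianReal 0 (v₁ + v₂) := by
  rcases eq_or_ne v₁ 0 with h₁ | h₁
  · rw [h₁, gaussianReal_zero_var, Measure.dirac_zero_conv, zero_add]
  rcases eq_or_ne v₂ 0 with h₂ | h₂
  · rw [h₂, gaussianReal_zero_var, Measure.conv_dirac_zero, add_zero]
  have hV : v₁ + v₂ ≠ 0 := by positivity
  ext s hs
  rw [show (gaussianReal 0 v₁).conv (gaussianReal 0 v₂)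
      = Measure.map (fun p : ℝ × ℝ => p.1 + p.2) ((gaussianReal 0 v₁).prod (gaussianReal 0 v₂)) from rfl,
    Measure.map_apply measurable_add hs,
    Measure.prod_apply (measurable_add hs)]
  have step1 : ∀ x : ℝ, (gaussianReal 0 v₂) (Prod.mk x ⁻¹' ((fun p : ℝ × ℝ => p.1 + p.2) ⁻¹' s))
      = ∫⁻ y in s, gaussianPDF 0 v₂ (y - x) := by
    intro x
    have : (Prod.mk x ⁻¹' ((fun p : ℝ × ℝ => p.1 + p.2) ⁻¹' s)) = (fun y => x + y) ⁻¹' s := rfl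
    rw [this, ← Measure.map_apply (measurable_const_add x) hs,
      gaussianReal_map_const_add, zero_add, gaussianReal_apply _ h₂]
    refine lintegral_congr fun y => ?_
    rw [gaussianPDF, gaussianPDF, gaussianPDFReal_sub, zero_add]
  simp_rw [step1]
  rw [gaussianReal_of_var_ne_zero 0 h₁,
    lintegral_withDensity_eq_lintegral_mul volume (measurable_gaussianPDF 0 v₁)
      (by
        have h : Measurable (Function.uncurry fun (x y : ℝ) => gaussianPDF 0 v₂ (y - x)) :=
          (measurable_gaussianPDF 0 v₂).comp (measurable_snd.sub measurable_fst)
        exact h.lintegral_prod_right)]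
  simp only [Pi.mul_apply]
  calc ∫⁻ x, gaussianPDF 0 v₁ x * ∫⁻ y in s, gaussianPDF 0 v₂ (y - x)
      = ∫⁻ x, ∫⁻ y in s, gaussianPDF 0 v₁ x * gaussianPDF 0 v₂ (y - x) := by
        refine lintegral_congr fun x => ?_
        have hm2 : Measurable fun y : ℝ => gaussianPDF 0 v₂ (y - x) :=
          (measurable_gaussianPDF 0 v₂).comp (measurable_id.sub measurable_const)
        rw [lintegral_const_mul _ hm2]
    _ = ∫⁻ y in s, ∫⁻ x, gaussianPDF 0 v₁ x * gaussianPDF 0 v₂ (y - x) := by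
        apply lintegral_lintegral_swap
        exact (((measurable_gaussianPDF 0 v₁).comp measurable_fst).mul
          ((measurable_gaussianPDF 0 v₂).comp (measurable_snd.sub measurable_fst))).aemeasurable
    _ = ∫⁻ y in s, gaussianPDF 0 (v₁ + v₂) y := by
        refine lintegral_congr fun y => ?_
        simp_rw [gaussianPDF,
          ← ENNReal.ofReal_mul (gaussianPDFReal_nonneg 0 v₁ _)]
        rw [← ofReal_integral_eq_lintegral_ofReal (integrable_conv_integrand v₁ v₂ y)
          (ae_of_all _ fun x => mul_nonneg (gaussianPDFReal_nonneg _ _ _) (gaussianPDFReal_nonneg _ _ _)),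
          gauss_conv_real v₁ v₂ h₁ h₂ y]
    _ = (gaussianReal 0 (v₁ + v₂)) s := (gaussianReal_apply _ hV s).symm

lemma gaussianReal_add_indep {Ω : Type*} [MeasurableSpace Ω] {P : Measure Ω}
    [IsProbabilityMeasure P] {v₁ v₂ : ℝ≥0} {X Y : Ω → ℝ}
    (hX : Measurable X) (hY : Measurable Y) (hXY : IndepFun X Y P)
    (hXd : Measure.map X P = gaussianReal 0 v₁)
    (hYd : Measure.map Y P = gaussianReal 0 v₂) :
    Measure.map (fun ω => X ω + Y ω) P = gaussianReal 0 (v₁ + v₂) := by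
  have hpair : Measure.map (fun ω => (X ω, Y ω)) P
      = (Measure.map X P).prod (Measure.map Y P) :=
    (indepFun_iff_map_prod_eq_prod_map_map hX.aemeasurable hY.aemeasurable).mp hXY
  have hcomp : (fun ω => X ω + Y ω)
      = (fun p : ℝ × ℝ => p.1 + p.2) ∘ (fun ω => (X ω, Y ω)) := rfl
  rw [hcomp, ← Measure.map_map measurable_add (hX.prodMk hY), hpair, hXd, hYd,
    ← gaussianReal_conv v₁ v₂]
  rfl

lemma gaussianReal_sum_indep {Ω : Type*} [MeasurableSpace Ω] {P : Measure Ω}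
    [IsProbabilityMeasure P] {ι : Type*} {f : ι → Ω → ℝ} {w : ι → ℝ≥0}
    (hmeas : ∀ i, Measurable (f i))
    (hindep : iIndepFun f P)
    (t : Finset ι) (hdist : ∀ i ∈ t, Measure.map (f i) P = gaussianReal 0 (w i)) :
    Measure.map (fun ω => ∑ i ∈ t, f i ω) P = gaussianReal 0 (∑ i ∈ t, w i) := by
  classical
  induction t using Finset.induction_on with
  | empty =>
      simp only [Finset.sum_empty]
      rw [show (fun _ : Ω => (0:ℝ)) = fun _ => (0:ℝ) from rfl, Measure.map_const,
        measure_univ, one_smul, ← gaussianReal_zero_var]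
  | insert a s' hi ih =>
      rw [Finset.sum_insert hi]
      simp_rw [Finset.sum_insert hi]
      have hsum : Measurable (fun ω => ∑ i ∈ s', f i ω) := by
        exact Finset.measurable_sum s' fun i _ => hmeas i
      have hind : IndepFun (fun ω => ∑ i ∈ s', f i ω) (f a) P := by
        have h := hindep.indepFun_finsetSum_of_notMem hmeas hi
        have he : (∑ j ∈ s', f j) = fun ω => ∑ i ∈ s', f i ω := by
          ext ω; simp [Finset.sum_apply]
        rwa [he] at h
      have := gaussianReal_add_indep hsum (hmeas a) hind
        (ih fun i hi' => hdist i (Finset.mem_insert_of_mem hi'))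
        (hdist a (Finset.mem_insert_self a s'))
      rw [show w a + ∑ x ∈ s', w x = ∑ i ∈ s', w i + w a from add_comm _ _, ← this]
      congr 1
      ext ω
      ring

lemma integral_Ioi_mul_exp (b : ℝ) (hb : 0 < b) (a : ℝ) :
    ∫ x in Set.Ioi a, x * rexp (-b * x ^ 2) = rexp (-b * a ^ 2) / (2 * b) := by
  have hderiv : ∀ x ∈ Set.Ici a, HasDerivAt (fun x : ℝ => -(2 * b)⁻¹ * rexp (-b * x ^ 2))
      (x * rexp (-b * x ^ 2)) x := by
    intro x _
    have h1 : HasDerivAt (fun x : ℝ => -b * x ^ 2) (-b * (2 * x)) x := by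
      simpa using ((hasDerivAt_pow 2 x).const_mul (-b))
    have h2 := (h1.exp).const_mul (-(2 * b)⁻¹)
    refine h2.congr_deriv ?_
    field_simp
  have hint : IntegrableOn (fun x : ℝ => x * rexp (-b * x ^ 2)) (Set.Ioi a) :=
    (integrable_mul_exp_neg_mul_sq hb).integrableOn
  have htend : Tendsto (fun x : ℝ => -(2 * b)⁻¹ * rexp (-b * x ^ 2)) atTop (nhds 0) := by
    have h1 : Tendsto (fun x : ℝ => -b * x ^ 2) atTop atBot := by
      apply Tendsto.const_mul_atTop_of_neg (by linarith : -b < 0)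
      exact tendsto_pow_atTop (by norm_num)
    have := (Real.tendsto_exp_atBot.comp h1).const_mul (-(2 * b)⁻¹)
    simpa using this
  rw [integral_Ioi_of_hasDerivAt_of_tendsto' hderiv hint htend]
  field_simp
  ring

lemma gaussianReal_Ioi_le (V : ℝ≥0) (hV : V ≠ 0) {a : ℝ} (ha : 0 < a) :
    (gaussianReal 0 V) (Set.Ioi a)
      ≤ ENNReal.ofReal ((√(2 * π * V))⁻¹ * (V / a) * rexp (-a ^ 2 / (2 * V))) := by
  have hVpos : (0:ℝ) < V := by exact_mod_cast pos_iff_ne_zero.mpr hV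
  set b : ℝ := (2 * (V:ℝ))⁻¹ with hb'
  have hb : 0 < b := by positivity
  rw [gaussianReal_apply_eq_integral 0 hV]
  apply ENNReal.ofReal_le_ofReal
  have hpdf : ∀ x : ℝ, gaussianPDFReal 0 V x = (√(2 * π * V))⁻¹ * rexp (-b * x ^ 2) := by
    intro x
    rw [gaussianPDFReal, sub_zero, hb']
    congr 1
    field_simp
  have hint2 : IntegrableOn (fun x : ℝ => (√(2 * π * (V:ℝ)))⁻¹ / a * (x * rexp (-b * x ^ 2)))
      (Set.Ioi a) := ((integrable_mul_exp_neg_mul_sq hb).const_mul _).integrableOn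
  calc ∫ x in Set.Ioi a, gaussianPDFReal 0 V x
      ≤ ∫ x in Set.Ioi a, (√(2 * π * (V:ℝ)))⁻¹ / a * (x * rexp (-b * x ^ 2)) := by
        apply setIntegral_mono_on (integrable_gaussianPDFReal 0 V).integrableOn hint2
          measurableSet_Ioi
        intro x hx
        rw [Set.mem_Ioi] at hx
        rw [hpdf x]
        rw [div_mul_eq_mul_div, mul_comm x, mul_div_assoc, mul_assoc]
        apply mul_le_mul_of_nonneg_left _ (by positivity)
        have h1 : (1:ℝ) ≤ x / a := (one_le_div ha).mpr (le_of_lt hx)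
        rw [mul_div_assoc]
        nlinarith [Real.exp_pos (-b * x ^ 2)]
    _ = (√(2 * π * (V:ℝ)))⁻¹ / a * (rexp (-b * a ^ 2) / (2 * b)) := by
        rw [MeasureTheory.integral_const_mul, integral_Ioi_mul_exp b hb a]
    _ = (√(2 * π * V))⁻¹ * (V / a) * rexp (-a ^ 2 / (2 * V)) := by
        rw [hb']
        rw [show -a ^ 2 / (2 * (V:ℝ)) = -(2 * (V:ℝ))⁻¹ * a ^ 2 by field_simp]
        field_simp

lemma gaussianReal_abs_tail (V : ℝ≥0) (hV : V ≠ 0) {a : ℝ} (ha : 0 < a) :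
    (gaussianReal 0 V) {x | a < |x|}
      ≤ ENNReal.ofReal (√(2 / π) * (√V / a) * rexp (-a ^ 2 / (2 * V))) := by
  have hVpos : (0:ℝ) < V := by exact_mod_cast pos_iff_ne_zero.mpr hV
  have hset : {x : ℝ | a < |x|} = Set.Iio (-a) ∪ Set.Ioi a := by
    ext x
    simp only [Set.mem_setOf_eq, Set.mem_union, Set.mem_Iio, Set.mem_Ioi, lt_abs]
    constructor
    · rintro (h | h)
      · right; exact h
      · left; linarith
    · rintro (h | h)
      · right; linarith
      · left; exact h
  have hsymm : (gaussianReal 0 V) (Set.Iio (-a)) = (gaussianReal 0 V) (Set.Ioi a) := by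
    have hmap := gaussianReal_map_const_mul (μ := 0) (v := V) (-1)
    rw [show (NNReal.mk ((-1:ℝ)^2) (sq_nonneg _)) = 1 from by ext; norm_num, one_mul,
      mul_zero] at hmap
    conv_rhs => rw [← hmap]
    rw [Measure.map_apply (measurable_const_mul (-1)) measurableSet_Ioi]
    congr 1
    ext x
    simp only [Set.mem_Iio, Set.mem_preimage, Set.mem_Ioi]
    constructor <;> intro h <;> linarith
  calc (gaussianReal 0 V) {x | a < |x|}
      ≤ (gaussianReal 0 V) (Set.Iio (-a)) + (gaussianReal 0 V) (Set.Ioi a) := by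
        rw [hset]; exact measure_union_le _ _
    _ = 2 * (gaussianReal 0 V) (Set.Ioi a) := by rw [hsymm, two_mul]
    _ ≤ 2 * ENNReal.ofReal ((√(2 * π * V))⁻¹ * (V / a) * rexp (-a ^ 2 / (2 * V))) := by
        exact mul_le_mul_right (gaussianReal_Ioi_le V hV ha) 2
    _ = ENNReal.ofReal (2 * ((√(2 * π * V))⁻¹ * (V / a) * rexp (-a ^ 2 / (2 * V)))) := by
        rw [ENNReal.ofReal_mul (by norm_num : (0:ℝ) ≤ 2)]
        norm_num
    _ = ENNReal.ofReal (√(2 / π) * (√V / a) * rexp (-a ^ 2 / (2 * V))) := by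
        congr 1
        have key : 2 * (√(2 * π * (V:ℝ)))⁻¹ * V = √(2 / π) * √(V:ℝ) := by
          rw [← Real.sqrt_mul (by positivity) (V:ℝ),
            show (2:ℝ) / π * V = (2 * (√(2 * π * (V:ℝ)))⁻¹ * V) ^ 2 by
              rw [mul_pow, mul_pow, inv_pow, Real.sq_sqrt (by positivity)]
              field_simp,
            Real.sqrt_sq (by positivity)]
        calc 2 * ((√(2 * π * (V:ℝ)))⁻¹ * ((V:ℝ) / a) * rexp (-a ^ 2 / (2 * V)))
            = (2 * (√(2 * π * (V:ℝ)))⁻¹ * V) / a * rexp (-a ^ 2 / (2 * V)) := by ring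
          _ = √(2 / π) * (√(V:ℝ) / a) * rexp (-a ^ 2 / (2 * V)) := by rw [key]; ring

/-- Probability bound for the complement of the noise event
`E' = {‖n⁻¹X₀ᵀε‖_∞ ≤ c₂′√((log n)/n)}` for i.i.d. `N(0,σ²)` noise and
columns of `X₀` of squared norm `n` (Lemma 2 of the paper). -/
theorem noise_event_prob_bound_oracle
    {Ω : Type*} [MeasurableSpace Ω] (P : Measure Ω) [IsProbabilityMeasure P]
    (n s : ℕ) (hn : 2 ≤ n) (hs : 1 ≤ s)
    (σ c₂' : ℝ) (hσ : 0 < σ) (hc₂' : 0 < c₂')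
    (X₀ : Matrix (Fin n) (Fin s) ℝ) (hcols : ∀ j, ∑ i, (X₀ i j) ^ 2 = (n : ℝ))
    (ε : Ω → Fin n → ℝ)
    (hmeas : ∀ i, Measurable fun ω => ε ω i)
    (hdist : ∀ i, Measure.map (fun ω => ε ω i) P = gaussianReal 0 ⟨σ ^ 2, sq_nonneg σ⟩)
    (hindep : iIndepFun (fun i ω => ε ω i) P) :
    (P {ω | ∃ j, c₂' * Real.sqrt (Real.log n / n) <
        |(n : ℝ)⁻¹ * ∑ i, X₀ i j * ε ω i|}).toReal ≤
      Real.sqrt (2 / Real.pi) * c₂'⁻¹ * σ * s / Real.sqrt (Real.log n) *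
        (n : ℝ) ^ (-(c₂' ^ 2) / (2 * σ ^ 2)) := by
  have hn1 : (1:ℝ) < n := by exact_mod_cast lt_of_lt_of_le one_lt_two hn
  have hnpos : (0:ℝ) < n := by linarith
  have hlog : 0 < Real.log n := Real.log_pos hn1
  set t : ℝ := c₂' * Real.sqrt (Real.log n / n) with ht'
  have ht : 0 < t := mul_pos hc₂' (Real.sqrt_pos.mpr (div_pos hlog hnpos))
  set a : ℝ := n * t with ha'
  have ha : 0 < a := mul_pos hnpos ht
  -- the variance of each column sum
  set Vn : ℝ≥0 := NNReal.mk (n * σ ^ 2) (by positivity) with hVn'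
  have hVn : Vn ≠ 0 := by
    intro h
    have := congrArg (fun x : ℝ≥0 => (x:ℝ)) h
    simp only [hVn', NNReal.coe_mk, NNReal.coe_zero] at this
    nlinarith
  -- the single-column bound, already in final algebraic form
  set B : ℝ := Real.sqrt (2 / Real.pi) * c₂'⁻¹ * σ / Real.sqrt (Real.log n) *
      (n : ℝ) ^ (-(c₂' ^ 2) / (2 * σ ^ 2)) with hB'
  have hBnonneg : 0 ≤ B := by positivity
  have key : ∀ j : Fin s, P {ω | t < |(n : ℝ)⁻¹ * ∑ i, X₀ i j * ε ω i|}
      ≤ ENNReal.ofReal B := by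
    intro j
    have hWmeas : Measurable (fun ω => ∑ i, X₀ i j * ε ω i) :=
      Finset.measurable_sum _ fun i _ => (hmeas i).const_mul (X₀ i j)
    -- law of the column sum
    have hlaw : Measure.map (fun ω => ∑ i, X₀ i j * ε ω i) P = gaussianReal 0 Vn := by
      have h1 := gaussianReal_sum_indep
        (f := fun i ω => X₀ i j * ε ω i)
        (w := fun i => ⟨(X₀ i j) ^ 2, sq_nonneg _⟩ * ⟨σ ^ 2, sq_nonneg σ⟩)
        (fun i => (hmeas i).const_mul (X₀ i j))
        (hindep.comp (fun i x => X₀ i j * x) (fun i => measurable_const_mul _))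
        Finset.univ
        (fun i _ => by
          have h2 : Measure.map (fun ω => X₀ i j * ε ω i) P
              = (Measure.map (fun ω => ε ω i) P).map (fun x => X₀ i j * x) := by
            rw [Measure.map_map (measurable_const_mul _) (hmeas i)]
            rfl
          rw [h2, hdist i]
          exact (gaussianReal_map_const_mul (μ := 0) (X₀ i j)).trans (congrArg₂ gaussianReal (mul_zero _) rfl))
      rw [h1]
      congr 1
      apply NNReal.coe_injective
      push_cast
      show ∑ i, X₀ i j ^ 2 * σ ^ 2 = (Vn:ℝ)
      rw [← Finset.sum_mul, hcols j, hVn', NNReal.coe_mk]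
    -- rewrite the event as a preimage
    have hev : {ω | t < |(n : ℝ)⁻¹ * ∑ i, X₀ i j * ε ω i|}
        = (fun ω => ∑ i, X₀ i j * ε ω i) ⁻¹' {x | a < |x|} := by
      ext ω
      simp only [Set.mem_setOf_eq, Set.mem_preimage]
      rw [abs_mul, abs_inv, abs_of_pos hnpos, inv_mul_eq_div, lt_div_iff₀ hnpos, ha',
        mul_comm t (n:ℝ)]
    have habs_meas : MeasurableSet {x : ℝ | a < |x|} :=
      (isOpen_lt continuous_const continuous_abs).measurableSet
    rw [hev, ← Measure.map_apply hWmeas habs_meas, hlaw]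
    refine le_trans (gaussianReal_abs_tail Vn hVn ha) (ENNReal.ofReal_le_ofReal (le_of_eq ?_))
    -- algebraic simplification of the bound
    have hsqn : (0:ℝ) < Real.sqrt n := Real.sqrt_pos.mpr hnpos
    have hsql : (0:ℝ) < Real.sqrt (Real.log n) := Real.sqrt_pos.mpr hlog
    have hsd : Real.sqrt (Real.log n / n) = Real.sqrt (Real.log n) / Real.sqrt n :=
      Real.sqrt_div hlog.le n
    have hsn : Real.sqrt (Vn:ℝ) = σ * Real.sqrt n := by
      rw [hVn', NNReal.coe_mk, mul_comm, Real.sqrt_mul (sq_nonneg σ), Real.sqrt_sq hσ.le]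
    have ha2 : a = c₂' * Real.sqrt (Real.log n) * Real.sqrt n := by
      rw [ha', ht', hsd,
        show (n:ℝ) * (c₂' * (Real.sqrt (Real.log n) / Real.sqrt n))
          = c₂' * Real.sqrt (Real.log n) * ((n:ℝ) / Real.sqrt n) by ring,
        Real.div_sqrt]
    have heq : Real.sqrt (Vn:ℝ) / a = c₂'⁻¹ * σ / Real.sqrt (Real.log n) := by
      rw [hsn, ha2, mul_div_mul_right _ _ (ne_of_gt hsqn)]
      field_simp
    have hexp : rexp (-a ^ 2 / (2 * Vn)) = (n:ℝ) ^ (-(c₂' ^ 2) / (2 * σ ^ 2)) := by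
      rw [Real.rpow_def_of_pos hnpos]
      congr 1
      rw [ha', ht', mul_pow, mul_pow, Real.sq_sqrt (by positivity : (0:ℝ) ≤ Real.log n / n),
        hVn', NNReal.coe_mk]
      field_simp
    rw [hB', heq, hexp]
    ring
  -- union bound
  have hsub : {ω | ∃ j, t < |(n : ℝ)⁻¹ * ∑ i, X₀ i j * ε ω i|}
      = ⋃ j, {ω | t < |(n : ℝ)⁻¹ * ∑ i, X₀ i j * ε ω i|} := Set.setOf_exists _
  have hle : P {ω | ∃ j, t < |(n : ℝ)⁻¹ * ∑ i, X₀ i j * ε ω i|}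
      ≤ ENNReal.ofReal ((s : ℝ) * B) := by
    rw [hsub]
    calc P (⋃ j, {ω | t < |(n : ℝ)⁻¹ * ∑ i, X₀ i j * ε ω i|})
        ≤ ∑' j : Fin s, P {ω | t < |(n : ℝ)⁻¹ * ∑ i, X₀ i j * ε ω i|} :=
          measure_iUnion_le _
      _ ≤ ∑' _j : Fin s, ENNReal.ofReal B := ENNReal.tsum_le_tsum key
      _ = (s : ℝ≥0∞) * ENNReal.ofReal B := by
          rw [tsum_fintype]
          simp [Finset.sum_const, nsmul_eq_mul]
      _ = ENNReal.ofReal ((s : ℝ) * B) := by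
          rw [ENNReal.ofReal_mul (by positivity : (0:ℝ) ≤ (s:ℝ)), ENNReal.ofReal_natCast]
  have hfin := ENNReal.toReal_le_of_le_ofReal (by positivity : (0:ℝ) ≤ (s:ℝ) * B) hle
  refine le_trans hfin (le_of_eq ?_)
  rw [hB']
  ring
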